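/- In any triangle with sides a, b, c, area S, circumradius R, and inradius r, a² + b² + c² ≥ 4S·√(3 + 4(R − 2r)/(4R + r)) + (a−b)² + (b−c)² + (c−a)² (sharpened Finsler–Hadwiger inequality). -/

import Mathlib

theorem schur_aux (u v w : ℝ) (hu : 0 ≤ u) (hv : 0 ≤ v) (hw : 0 ≤ w) :
    (u + v + w) ^ 3 + 9 * (u * v * w) ≥ 4 * (u + v + w) * (u * v + v * w + w * u) := by
  rcases le_total u v with h1 | h1 <;> rcases le_total v w with h2 | h2 <;>
    rcases le_total u w with h3 | h3 <;>
    nlinarith [mul_nonneg hu hv, mul_nonneg hv hw, mul_nonneg hu hw,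
      sq_nonneg (u - v), sq_nonneg (v - w), sq_nonneg (u - w),
      mul_nonneg (mul_nonneg hu hv) hw]

theorem key_poly (x y z : ℝ) (hx : 0 < x) (hy : 0 < y) (hz : 0 < z) :
    (4 * (x + y + z) * (x * y + y * z + z * x) - 9 * (x * y * z)) * ((x + y + z) * (x * y * z))
      ≤ (x * y + y * z + z * x) ^ 2 * ((x + y + z) * (x * y + y * z + z * x)) := by
  have h := schur_aux (x * y) (y * z) (z * x) (by positivity) (by positivity) (by positivity)
  nlinarith [mul_nonneg (show (0:ℝ) ≤ x + y + z by positivity) (by nlinarith [h] :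
    (0:ℝ) ≤ (x * y + y * z + z * x) ^ 3 + 9 * (x * y * z) ^ 2
      - 4 * (x + y + z) * (x * y + y * z + z * x) * (x * y * z))]

theorem refinement_two (a b c : ℝ) (ha : 0 < a) (hb : 0 < b) (hc : 0 < c)
    (hA : a < b + c) (hB : b < c + a) (hC : c < a + b) (s S : ℝ) (hs : s = (a + b + c) / 2)
    (hS : S = Real.sqrt (s * (s - a) * (s - b) * (s - c))) (R : ℝ) (hR : R = a * b * c / (4 * S)) (r : ℝ) (hr : r = S / s) :
    a ^ 2 + b ^ 2 + c ^ 2 ≥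
      4 * S * Real.sqrt (3 + 4 * (R - 2 * r) / (4 * R + r))
      + (a - b) ^ 2 + (b - c) ^ 2 + (c - a) ^ 2 := by
  obtain ⟨x, hxd⟩ : ∃ x, x = s - a := ⟨_, rfl⟩
  obtain ⟨y, hyd⟩ : ∃ y, y = s - b := ⟨_, rfl⟩
  obtain ⟨z, hzd⟩ : ∃ z, z = s - c := ⟨_, rfl⟩
  rw [← hxd, ← hyd, ← hzd] at hS
  have hx : 0 < x := by rw [hxd, hs]; linarith
  have hy : 0 < y := by rw [hyd, hs]; linarith
  have hz : 0 < z := by rw [hzd, hs]; linarith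
  have hsx : s = x + y + z := by rw [hxd, hyd, hzd, hs]; ring
  have hspos : 0 < s := by rw [hs]; linarith
  have ha' : a = y + z := by rw [hyd, hzd, hs]; ring
  have hb' : b = x + z := by rw [hxd, hzd, hs]; ring
  have hc' : c = x + y := by rw [hxd, hyd, hs]; ring
  have hprod : 0 < s * x * y * z := by positivity
  have hSpos : 0 < S := by rw [hS]; exact Real.sqrt_pos.mpr hprod
  have hS2 : S ^ 2 = s * x * y * z := by rw [hS]; exact Real.sq_sqrt hprod.le
  have hQ : 0 < x * y + y * z + z * x := by positivity
  have hP : 0 < x * y * z := by positivity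
  -- r = P / S
  have hrP : r = (x * y * z) / S := by
    rw [hr, div_eq_div_iff hspos.ne' hSpos.ne']
    nlinarith [hS2]
  -- R = (s*Q - P) / (4S)
  have hRe : R = (s * (x * y + y * z + z * x) - x * y * z) / (4 * S) := by
    have habc : a * b * c = s * (x * y + y * z + z * x) - x * y * z := by
      rw [ha', hb', hc', hsx]; ring
    rw [hR, habc]
  have h4Rr : 4 * R + r = s * (x * y + y * z + z * x) / S := by
    rw [hRe, hrP]; field_simp; ring
  have hE : 3 + 4 * (R - 2 * r) / (4 * R + r)
      = (4 * s * (x * y + y * z + z * x) - 9 * (x * y * z)) / (s * (x * y + y * z + z * x)) := by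
    rw [h4Rr, hRe, hrP]
    have h1 : s * (x * y + y * z + z * x) ≠ 0 := by positivity
    field_simp
    ring
  have hle : 3 + 4 * (R - 2 * r) / (4 * R + r) ≤ ((x * y + y * z + z * x) / S) ^ 2 := by
    rw [hE, div_pow, hS2, div_le_div_iff₀ (by positivity) (by positivity), hsx]
    have := key_poly x y z hx hy hz
    linarith
  have key : Real.sqrt (3 + 4 * (R - 2 * r) / (4 * R + r)) ≤ (x * y + y * z + z * x) / S := by
    calc Real.sqrt (3 + 4 * (R - 2 * r) / (4 * R + r))
        ≤ Real.sqrt (((x * y + y * z + z * x) / S) ^ 2) := Real.sqrt_le_sqrt hle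
      _ = (x * y + y * z + z * x) / S := Real.sqrt_sq (by positivity)
  have hT : 4 * S * Real.sqrt (3 + 4 * (R - 2 * r) / (4 * R + r))
      ≤ 4 * (x * y + y * z + z * x) := by
    have h2 := mul_le_mul_of_nonneg_left key (by positivity : (0:ℝ) ≤ 4 * S)
    calc 4 * S * Real.sqrt (3 + 4 * (R - 2 * r) / (4 * R + r))
        ≤ 4 * S * ((x * y + y * z + z * x) / S) := h2
      _ = 4 * (x * y + y * z + z * x) := by field_simp
  have hid : a ^ 2 + b ^ 2 + c ^ 2 - (a - b) ^ 2 - (b - c) ^ 2 - (c - a) ^ 2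
      = 4 * (x * y + y * z + z * x) := by
    rw [ha', hb', hc']; ring
  linarith [hT, hid]
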